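/- Let k ≥ 2 be an integer and let T be a balanced tree on 2k+1 vertices. Let G be a graph whose vertex set is partitioned into two nonempty sets A and B such that: every pair consisting of a vertex of A and a vertex of B is joined by an edge, B is an independent set in G, and the induced subgraph G[A] is a vertex-disjoint union covering all of A of copies of K_{k−1,k−1} and copies of K_{k,k} minus a perfect matching. Then G contains no subgraph isomorphic to the suspension T̂. -/

import Mathlib

/-- The suspension `Ĥ` of a graph `H`: a new vertex (`none`) joined to all of `H`. -/
def suspension {V : Type*} (H : SimpleGraph V) : SimpleGraph (Option V) :=
  SimpleGraph.fromRel (fun x y => x = none ∨ ∃ a b, x = some a ∧ y = some b ∧ H.Adj a b)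

/-- `K_{k,k}` minus a perfect matching: `Sum.inl i` is adjacent to `Sum.inr j` iff `i ≠ j`. -/
def kkMinusPM (k : ℕ) : SimpleGraph (Fin k ⊕ Fin k) :=
  SimpleGraph.fromRel (fun x y =>
    match x, y with
    | Sum.inl i, Sum.inr j => i ≠ j
    | _, _ => False)

lemma st18_walk_iff {V : Type} {T : SimpleGraph V} (P : V → Prop)
    (h : ∀ a b, T.Adj a b → (P a ↔ P b)) {x y : V} (hr : T.Reachable x y) :
    P x ↔ P y := by
  obtain ⟨w⟩ := hr
  induction w with
  | nil => exact Iff.rfl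
  | cons hadj _ ih => exact (h _ _ hadj).trans ih

lemma st18_bip₁ (m : ℕ) (x y : Fin m ⊕ Fin m)
    (h : (completeBipartiteGraph (Fin m) (Fin m)).Adj x y) :
    (x.isLeft ∧ y.isRight) ∨ (x.isRight ∧ y.isLeft) := h

lemma st18_bip₂ (k : ℕ) (x y : Fin k ⊕ Fin k) (h : (kkMinusPM k).Adj x y) :
    (x.isLeft ∧ y.isRight) ∨ (x.isRight ∧ y.isLeft) := by
  rw [kkMinusPM, SimpleGraph.fromRel_adj] at h
  rcases x with i | i <;> rcases y with j | j <;> simp_all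

lemma st18_notri {β γ : Type} {H : SimpleGraph (β ⊕ γ)}
    (hbip : ∀ x y, H.Adj x y → (x.isLeft ∧ y.isRight) ∨ (x.isRight ∧ y.isLeft))
    {a b c : β ⊕ γ} (hab : H.Adj a b) (hac : H.Adj a c) (hbc : H.Adj b c) : False := by
  have h1 := hbip _ _ hab
  have h2 := hbip _ _ hac
  have h3 := hbip _ _ hbc
  rcases a with a | a <;> rcases b with b | b <;> rcases c with c | c <;> simp_all

lemma st18_nbhd₁ (m : ℕ) (t : Fin m ⊕ Fin m) :
    ∃ Q : Finset (Fin m ⊕ Fin m), Q.card = m ∧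
      ∀ w, (completeBipartiteGraph (Fin m) (Fin m)).Adj t w → w ∈ Q := by
  rcases t with i | i
  · refine ⟨Finset.univ.image Sum.inr, ?_, ?_⟩
    · rw [Finset.card_image_of_injective _ Sum.inr_injective, Finset.card_univ,
        Fintype.card_fin]
    · rintro (j | j) h <;> simp_all
  · refine ⟨Finset.univ.image Sum.inl, ?_, ?_⟩
    · rw [Finset.card_image_of_injective _ Sum.inl_injective, Finset.card_univ,
        Fintype.card_fin]
    · rintro (j | j) h <;> simp_all

lemma st18_nbhd₂ (k : ℕ) (t : Fin k ⊕ Fin k) :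
    ∃ Q : Finset (Fin k ⊕ Fin k), Q.card = k - 1 ∧
      ∀ w, (kkMinusPM k).Adj t w → w ∈ Q := by
  rcases t with i | i
  · refine ⟨(Finset.univ.erase i).image Sum.inr, ?_, ?_⟩
    · rw [Finset.card_image_of_injective _ Sum.inr_injective,
        Finset.card_erase_of_mem (Finset.mem_univ i), Finset.card_univ, Fintype.card_fin]
    · rintro (j | j) h <;> rw [kkMinusPM, SimpleGraph.fromRel_adj] at h <;>
        simp_all [eq_comm, ne_comm]
  · refine ⟨(Finset.univ.erase i).image Sum.inl, ?_, ?_⟩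
    · rw [Finset.card_image_of_injective _ Sum.inl_injective,
        Finset.card_erase_of_mem (Finset.mem_univ i), Finset.card_univ, Fintype.card_fin]
    · rintro (j | j) h <;> rw [kkMinusPM, SimpleGraph.fromRel_adj] at h <;>
        simp_all [eq_comm, ne_comm]

/-- Key structural facts about a part: no triangle through `t`, and bounded
neighbourhood of `t`. -/
lemma st18_key (k : ℕ) {α : Type} [DecidableEq α] (H : SimpleGraph α)
    (h : Nonempty (H ≃g completeBipartiteGraph (Fin (k - 1)) (Fin (k - 1))) ∨
      Nonempty (H ≃g kkMinusPM k)) (t : α) :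
    (∀ a b, H.Adj t a → H.Adj t b → H.Adj a b → False) ∧
      ∃ Q : Finset α, Q.card ≤ k - 1 ∧ ∀ w, H.Adj t w → w ∈ Q := by
  rcases h with h | h
  all_goals have e := h.some
  · constructor
    · intro a b hta htb hab
      exact st18_notri (st18_bip₁ (k - 1)) (e.map_adj_iff.mpr hta)
        (e.map_adj_iff.mpr htb) (e.map_adj_iff.mpr hab)
    · obtain ⟨Q', hQ'card, hQ'⟩ := st18_nbhd₁ (k - 1) (e t)
      refine ⟨Q'.image e.symm, le_trans Finset.card_image_le hQ'card.le, ?_⟩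
      intro w hw
      have : e w ∈ Q' := hQ' _ (e.map_adj_iff.mpr hw)
      exact Finset.mem_image.mpr ⟨e w, this, e.symm_apply_apply w⟩
  · constructor
    · intro a b hta htb hab
      exact st18_notri (st18_bip₂ k) (e.map_adj_iff.mpr hta)
        (e.map_adj_iff.mpr htb) (e.map_adj_iff.mpr hab)
    · obtain ⟨Q', hQ'card, hQ'⟩ := st18_nbhd₂ k (e t)
      refine ⟨Q'.image e.symm, le_trans Finset.card_image_le hQ'card.le, ?_⟩
      intro w hw
      have : e w ∈ Q' := hQ' _ (e.map_adj_iff.mpr hw)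
      exact Finset.mem_image.mpr ⟨e w, this, e.symm_apply_apply w⟩

theorem stmt18 (k : ℕ) (hk : 2 ≤ k)
    {V : Type} [Fintype V] [DecidableEq V] (T : SimpleGraph V)
    (htree : T.IsTree)
    (hcard : Fintype.card V = 2 * k + 1)
    (C : Finset V) (hC : C.card = k)
    (hCind : ∀ x ∈ C, ∀ y ∈ C, ¬ T.Adj x y)
    (hCcind : ∀ x ∈ Cᶜ, ∀ y ∈ Cᶜ, ¬ T.Adj x y)
    {W : Type} [Fintype W] [DecidableEq W]
    (G : SimpleGraph W) (A : Finset W)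
    (hAne : A.Nonempty) (hBne : Aᶜ.Nonempty)
    -- every vertex of `A` is joined to every vertex of `B = Aᶜ`
    (hcomplete : ∀ x ∈ A, ∀ y ∈ Aᶜ, G.Adj x y)
    -- `B = Aᶜ` is an independent set
    (hBind : ∀ x ∈ Aᶜ, ∀ y ∈ Aᶜ, ¬ G.Adj x y)
    -- `G[A]` is a vertex-disjoint union, covering `A`, of copies of `K_{k-1,k-1}`
    -- and copies of `K_{k,k}` minus a perfect matching
    (P : Finpartition A)
    (hparts : ∀ p ∈ P.parts,
      Nonempty ((G.induce (↑p : Set W)) ≃g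
        completeBipartiteGraph (Fin (k - 1)) (Fin (k - 1))) ∨
      Nonempty ((G.induce (↑p : Set W)) ≃g kkMinusPM k))
    (hcross : ∀ p ∈ P.parts, ∀ x ∈ p, ∀ y ∈ A, y ∉ p → ¬ G.Adj x y) :
    ¬ ∃ f : suspension T →g G, Function.Injective f := by
  classical
  rintro ⟨f, hf⟩
  set u := f none with hu
  -- basic adjacency facts
  have hapex : ∀ v : V, G.Adj u (f (some v)) := by
    intro v
    apply f.map_adj
    rw [suspension, SimpleGraph.fromRel_adj]
    exact ⟨by simp, Or.inl (Or.inl rfl)⟩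
  have hedge : ∀ a b : V, T.Adj a b → G.Adj (f (some a)) (f (some b)) := by
    intro a b hab
    apply f.map_adj
    rw [suspension, SimpleGraph.fromRel_adj]
    exact ⟨by simp [hab.ne], Or.inl (Or.inr ⟨a, b, rfl, rfl, hab⟩)⟩
  have hVne : Nonempty V := by
    rw [← Fintype.card_pos_iff, hcard]; omega
  obtain ⟨v₀⟩ := hVne
  have hreach : ∀ x y : V, T.Reachable x y := htree.isConnected.preconnected
  by_cases huA : u ∈ A
  case neg =>
    -- apex in B: all tree vertices map into A, and into a single part
    have hinA : ∀ v : V, f (some v) ∈ A := by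
      intro v
      by_contra hv
      exact hBind u (Finset.mem_compl.mpr huA) _ (Finset.mem_compl.mpr hv) (hapex v)
    obtain ⟨p, hp, hv₀p⟩ := P.exists_mem (hinA v₀)
    have hallp : ∀ v : V, f (some v) ∈ p := by
      intro v
      have key : ∀ a b : V, T.Adj a b → (f (some a) ∈ p ↔ f (some b) ∈ p) := by
        intro a b hab
        constructor
        · intro ha
          by_contra hb
          exact hcross p hp _ ha _ (hinA b) hb (hedge a b hab)
        · intro hb
          by_contra ha
          exact hcross p hp _ hb _ (hinA a) ha (hedge a b hab).symm
      exact (st18_walk_iff _ key (hreach v₀ v)).mp hv₀p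
    -- injection of V into the part p, contradiction with cardinalities
    have hinj : Function.Injective (fun v : V => (⟨f (some v), hallp v⟩ : (↑p : Set W))) := by
      intro a b hab
      have := congrArg Subtype.val hab
      exact Option.some_injective V (hf this)
    have hle : Finset.univ.card ≤ p.card :=
      Finset.card_le_card_of_injOn (fun v => f (some v)) (fun v _ => hallp v)
        (fun a _ b _ h => Option.some_injective V (hf h))
    rw [Finset.card_univ, hcard] at hle
    have hpc : Fintype.card (↑p : Set W) = p.card := by simp
    have hcardp : p.card ≤ 2 * k := by
      rcases hparts p hp with h' | h' <;>
        · have e := h'.some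
          have := e.card_eq
          rw [hpc] at this
          simp only [Fintype.card_sum, Fintype.card_fin] at this
          omega
    omega
  case pos =>
    -- apex in A, lying in part p
    obtain ⟨p, hp, hup⟩ := P.exists_mem huA
    obtain ⟨hnotri, Q, hQcard, hQ⟩ :=
      st18_key k (G.induce (↑p : Set W)) (hparts p hp) ⟨u, hup⟩
    -- each tree vertex maps either into p (adjacent to u there) or into B
    have hdisj : ∀ v : V, f (some v) ∈ p ∨ f (some v) ∈ Aᶜ := by
      intro v
      by_cases hv : f (some v) ∈ A
      · left
        by_contra hvp
        exact hcross p hp u hup _ hv hvp (hapex v)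
      · right; exact Finset.mem_compl.mpr hv
    set S : Finset V := Finset.univ.filter (fun v => f (some v) ∈ p) with hS
    have hmemS : ∀ v, v ∈ S ↔ f (some v) ∈ p := by
      intro v; simp [hS]
    -- S is independent in T
    have hSind : ∀ a ∈ S, ∀ b ∈ S, ¬ T.Adj a b := by
      intro a ha b hb hab
      rw [hmemS] at ha hb
      refine hnotri ⟨f (some a), ha⟩ ⟨f (some b), hb⟩ ?_ ?_ ?_
      · exact hapex a
      · exact hapex b
      · exact hedge a b hab
    -- Sᶜ is independent in T
    have hScind : ∀ a, a ∉ S → ∀ b, b ∉ S → ¬ T.Adj a b := by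
      intro a ha b hb hab
      rw [hmemS] at ha hb
      have ha' := (hdisj a).resolve_left ha
      have hb' := (hdisj b).resolve_left hb
      exact hBind _ ha' _ hb' (hedge a b hab)
    -- hence S = C or S = Cᶜ by uniqueness of bipartition of a connected graph
    have hedgeS : ∀ a b, T.Adj a b → (a ∈ S ↔ b ∉ S) := by
      intro a b hab
      constructor
      · intro ha hb; exact hSind a ha b hb hab
      · intro hb
        by_contra ha
        exact hScind a ha b hb hab
    have hedgeC : ∀ a b, T.Adj a b → (a ∈ C ↔ b ∉ C) := by
      intro a b hab
      constructor
      · intro ha hb; exact hCind a ha b hb hab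
      · intro hb
        by_contra ha
        exact hCcind a (Finset.mem_compl.mpr ha) b (Finset.mem_compl.mpr hb) hab
    have hRinv : ∀ a b, T.Adj a b → ((a ∈ S ↔ a ∈ C) ↔ (b ∈ S ↔ b ∈ C)) := by
      intro a b hab
      have h1 := hedgeS a b hab
      have h2 := hedgeC a b hab
      tauto
    have hSC : S = C ∨ S = Cᶜ := by
      by_cases h0 : v₀ ∈ S ↔ v₀ ∈ C
      · left
        ext v
        exact (st18_walk_iff _ hRinv (hreach v₀ v)).mp h0
      · right
        ext v
        have := (st18_walk_iff _ hRinv (hreach v₀ v)).not.mp h0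
        rw [Finset.mem_compl]
        tauto
    -- but |S| ≤ k - 1
    have hScard : S.card ≤ k - 1 := by
      have h1 : S.card ≤ (Q.image Subtype.val).card := by
        refine Finset.card_le_card_of_injOn
          (fun v => if h : f (some v) ∈ p then
            (Subtype.val (⟨f (some v), h⟩ : (↑p : Set W)) : W) else u) ?_ ?_
        · intro v hv
          rw [Finset.mem_coe, hmemS] at hv
          simp only [dif_pos hv]
          exact Finset.mem_image.mpr ⟨⟨f (some v), hv⟩, hQ _ (hapex v), rfl⟩
        · intro a ha b hb hab
          rw [Finset.mem_coe, hmemS] at ha hb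
          simp only [dif_pos ha, dif_pos hb] at hab
          exact Option.some_injective V (hf hab)
      exact le_trans h1 (le_trans Finset.card_image_le hQcard)
    have hCccard : Cᶜ.card = k + 1 := by
      have := Finset.card_compl C
      omega
    rcases hSC with h | h <;> rw [h] at hScard <;> omega
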